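/- Let C ⊆ F^n be a perfect binary code and let λ : C → ZMod 2 be an arbitrary map. Then the Vasil'ev code C' = {(x + y, |x| + λ(y), x) : x ∈ F^n, y ∈ C} ⊆ F^{2n+1} is a perfect binary code of length 2n+1. -/

import Mathlib

open Finset

/-- The binary vector space `F^n`. -/
abbrev F (n : ℕ) : Type := Fin n → ZMod 2

/-- Action of a coordinate permutation: `(π x) i = x (π⁻¹ i)`. -/
def permAct {n : ℕ} (π : Equiv.Perm (Fin n)) (x : F n) : F n := fun i => x (π⁻¹ i)

/-- `(v, π)` is an isometry fixing the code `C` set-wise. -/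
def IsIsoPair {n : ℕ} (C : Set (F n)) (v : F n) (π : Equiv.Perm (Fin n)) : Prop :=
  (fun x => v + permAct π x) '' C = C

/-- `C` is a single-error-correcting perfect binary code. -/
def IsPerfectCode {n : ℕ} (C : Set (F n)) : Prop :=
  ∀ x : F n, ∃! y : F n, y ∈ C ∧ hammingDist x y ≤ 1

/-- `P` is a propelinear structure on the code `C`. -/
def IsPropStructure {n : ℕ} (C : Set (F n)) (P : F n → Equiv.Perm (Fin n)) : Prop :=
  (∀ x ∈ C, IsIsoPair C x (P x)) ∧
  (∀ x ∈ C, ∀ y ∈ C, P (x + permAct (P x) y) = P x * P y)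

/-- `C` admits a propelinear structure. -/
def IsPropelinear {n : ℕ} (C : Set (F n)) : Prop :=
  ∃ P : F n → Equiv.Perm (Fin n), IsPropStructure C P

/-- The rank of a code: dimension of its linear span over GF(2). -/
noncomputable def codeRank {n : ℕ} (C : Set (F n)) : ℕ :=
  Module.finrank (ZMod 2) (Submodule.span (ZMod 2) C)

/-- The kernel of a code `C`: codewords whose translate fixes `C`. -/
def codeKernel {n : ℕ} (C : Set (F n)) : Set (F n) :=
  {x ∈ C | (fun c => x + c) '' C = C}

/-- A propelinear structure is normalized if codewords in the same coset
of the kernel get the same permutation. -/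
def IsNormalized {n : ℕ} (C : Set (F n)) (P : F n → Equiv.Perm (Fin n)) : Prop :=
  ∀ x ∈ C, ∀ y ∈ C, x + y ∈ codeKernel C → P x = P y

/-- A code is transitive if its automorphism group acts transitively on it. -/
def IsTransitive {n : ℕ} (C : Set (F n)) : Prop :=
  ∀ x ∈ C, ∀ y ∈ C, ∃ v π, IsIsoPair C v π ∧ v + permAct π x = y

/-- The (ZMod 2) weight parity `|x| = Σ_i x_i`. -/
def wt {n : ℕ} (x : F n) : ZMod 2 := ∑ i, x i

/-- Assemble a vector of `F^(2n+1)` from a first block of `n` coordinates,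
a middle coordinate and a last block of `n` coordinates. -/
def vasVec {n : ℕ} (a : F n) (b : ZMod 2) (c : F n) : F (2 * n + 1) :=
  fun i =>
    if h : (i : ℕ) < n then a ⟨i, h⟩
    else if h' : (i : ℕ) = n then b
    else c ⟨(i : ℕ) - (n + 1), by have := i.isLt; omega⟩

/-- The Vasil'ev code of `C` with function `lam`. -/
def vasCode {n : ℕ} (C : Set (F n)) (lam : F n → ZMod 2) : Set (F (2 * n + 1)) :=
  {w | ∃ x : F n, ∃ y ∈ C, w = vasVec (x + y) (wt x + lam y) x}

/-- Assemble a vector of `F^(tm+t+m)` from blocks of `tm`, `t` and `m` coordinates. -/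
def mollVec {t m : ℕ} (x : F (t * m)) (b : F t) (c : F m) : F (t * m + t + m) :=
  fun i =>
    if h : (i : ℕ) < t * m then x ⟨i, h⟩
    else if h' : (i : ℕ) < t * m + t then b ⟨(i : ℕ) - t * m, by omega⟩
    else c ⟨(i : ℕ) - (t * m + t), by have := i.isLt; omega⟩

/-- First generalized parity-check function: `p1(x)_i = Σ_j x_{ij}`. -/
def p1 {t m : ℕ} (x : F (t * m)) : F t := fun i => ∑ j : Fin m, x (finProdFinEquiv (i, j))

/-- Second generalized parity-check function: `p2(x)_j = Σ_i x_{ij}`. -/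
def p2 {t m : ℕ} (x : F (t * m)) : F m := fun j => ∑ i : Fin t, x (finProdFinEquiv (i, j))

/-- The Mollard code of `Ct` and `Cm` with function `f`. -/
def mollCode {t m : ℕ} (Ct : Set (F t)) (Cm : Set (F m)) (f : F t → F m) :
    Set (F (t * m + t + m)) :=
  {w | ∃ x : F (t * m), ∃ y ∈ Ct, ∃ z ∈ Cm, w = mollVec x (y + p1 x) (z + p2 x + f y)}

/-- The Vasil'ev code of a perfect code with an arbitrary function `lam`
is perfect. -/

private lemma vasHd_norm {n : ℕ} (u v : F n) : hammingDist u v = hammingNorm (u + v) := by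
  rw [hammingDist_eq_hammingNorm]
  congr 1
  funext i
  exact congrArg (· + v i) ((by decide : ∀ t : ZMod 2, -t = t) _)

private lemma vasNorm_add_le {n : ℕ} (u v : F n) :
    hammingNorm (u + v) ≤ hammingNorm u + hammingNorm v := by
  have h1 : hammingNorm (u + v) = hammingDist (u + v) 0 := (hammingDist_zero_right _).symm
  have h2 : hammingDist (u + v) v = hammingNorm u := by
    rw [vasHd_norm]
    congr 1
    funext i
    exact (by decide : ∀ p q : ZMod 2, (p + q) + q = p) _ _
  have h3 := hammingDist_triangle (u + v) v 0
  simp only [hammingDist_zero_right] at h3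
  omega

private lemma vasWt_add {n : ℕ} (u v : F n) : wt (u + v) = wt u + wt v := by
  simp [wt, Finset.sum_add_distrib]

private lemma vasWt_of_norm_one {n : ℕ} (e : F n) (h : hammingNorm e = 1) : wt e = 1 := by
  rw [hammingNorm] at h
  obtain ⟨i0, hi0⟩ := Finset.card_eq_one.mp h
  have hmem : ∀ i, e i ≠ 0 ↔ i ∈ ({i0} : Finset (Fin n)) := by
    intro i
    rw [← hi0]; simp
  have hsum : wt e = ∑ i ∈ ({i0} : Finset (Fin n)), e i := by
    rw [wt]
    symm
    apply Finset.sum_subset (Finset.subset_univ _)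
    intro i _ hni
    by_contra hne
    exact hni ((hmem i).mp hne)
  have hi0ne : e i0 ≠ 0 := (hmem i0).mpr (Finset.mem_singleton_self i0)
  rw [hsum, Finset.sum_singleton]
  exact (by decide : ∀ t : ZMod 2, t ≠ 0 → t = 1) _ hi0ne

private lemma vasSum_split {n : ℕ} (f : Fin (2*n+1) → ℕ) :
    ∑ i, f i = (∑ i : Fin n, f ⟨i, by omega⟩) + f ⟨n, by omega⟩ + ∑ i : Fin n, f ⟨n+1+i, by omega⟩ := by
  have h : n + (1 + n) = 2*n+1 := by omega
  rw [← (finCongr h).sum_comp f, Fin.sum_univ_add, Fin.sum_univ_add, Fin.sum_univ_one]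
  have e1 : ∀ i : Fin n, f ((finCongr h) (Fin.castAdd (1 + n) i)) = f ⟨i, by omega⟩ := by
    intro i; exact congrArg f (Fin.ext (by simp))
  have e2 : f ((finCongr h) (Fin.natAdd n (Fin.castAdd n 0))) = f ⟨n, by omega⟩ := by
    exact congrArg f (Fin.ext (by simp))
  have e3 : ∀ i : Fin n, f ((finCongr h) (Fin.natAdd n (Fin.natAdd 1 i))) = f ⟨n+1+i, by omega⟩ := by
    intro i; exact congrArg f (Fin.ext (by simp; omega))
  simp only [e2]
  rw [Finset.sum_congr rfl (fun i _ => e1 i), Finset.sum_congr rfl (fun i _ => e3 i)]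
  ring

private lemma vasVec_lt {n : ℕ} (a : F n) (b : ZMod 2) (c : F n) (i : Fin (2*n+1)) (h : (i:ℕ) < n) :
    vasVec a b c i = a ⟨i, h⟩ := by simp [vasVec, h]

private lemma vasVec_mid {n : ℕ} (a : F n) (b : ZMod 2) (c : F n) (i : Fin (2*n+1)) (h : (i:ℕ) = n) :
    vasVec a b c i = b := by simp [vasVec, h]

private lemma vasVec_gt {n : ℕ} (a : F n) (b : ZMod 2) (c : F n) (i : Fin (2*n+1)) (h : n < (i:ℕ)) :
    vasVec a b c i = c ⟨(i:ℕ) - (n+1), by have := i.isLt; omega⟩ := by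
  have h1 : ¬ (i:ℕ) < n := by omega
  have h2 : ¬ (i:ℕ) = n := by omega
  simp [vasVec, h1, h2]

private lemma vasDist_vasVec {n : ℕ} (a : F n) (b : ZMod 2) (c : F n)
    (a' : F n) (b' : ZMod 2) (c' : F n) :
    hammingDist (vasVec a b c) (vasVec a' b' c') =
      hammingDist a a' + (if b = b' then 0 else 1) + hammingDist c c' := by
  have key : ∀ u v : F (2*n+1), hammingDist u v = ∑ i, if u i ≠ v i then 1 else 0 := by
    intro u v; rw [hammingDist]; rw [Finset.card_filter]
  rw [key, vasSum_split]
  congr 1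
  · congr 1
    · rw [hammingDist, Finset.card_filter]
      apply Finset.sum_congr rfl; intro i _
      rw [vasVec_lt a b c _ (by simp), vasVec_lt a' b' c' _ (by simp)]
    · rw [vasVec_mid a b c _ rfl, vasVec_mid a' b' c' _ rfl]
      by_cases h : b = b' <;> simp [h]
  · rw [hammingDist, Finset.card_filter]
    apply Finset.sum_congr rfl; intro i _
    have hi : n < ((⟨n+1+i, by omega⟩ : Fin (2*n+1)) : ℕ) := by simp; omega
    rw [vasVec_gt a b c _ hi, vasVec_gt a' b' c' _ hi]
    have : ∀ (cc : F n), cc ⟨((⟨n+1+i, by omega⟩ : Fin (2*n+1)):ℕ) - (n+1), by omega⟩ = cc i := by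
      intro cc; congr 1; apply Fin.ext; simp
    rw [this c, this c']

private lemma vasVec_eta {n : ℕ} (w : F (2*n+1)) :
    w = vasVec (fun i => w ⟨i, by omega⟩) (w ⟨n, by omega⟩) (fun i => w ⟨n+1+i, by omega⟩) := by
  funext i
  rcases lt_trichotomy (i : ℕ) n with h | h | h
  · rw [vasVec_lt _ _ _ _ h]
  · rw [vasVec_mid _ _ _ _ h]
    exact congrArg w (Fin.ext h)
  · rw [vasVec_gt _ _ _ _ h]
    exact congrArg w (Fin.ext (by simp; omega))

theorem vasilev_perfect {n : ℕ} (C : Set (F n)) (hC : IsPerfectCode C)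
    (lam : F n → ZMod 2) : IsPerfectCode (vasCode C lam) := by
  intro w
  set a : F n := fun i => w ⟨i, by omega⟩ with ha
  set b : ZMod 2 := w ⟨n, by omega⟩ with hb
  set c : F n := fun i => w ⟨n+1+i, by omega⟩ with hc
  have hw : w = vasVec a b c := vasVec_eta w
  obtain ⟨y0, ⟨hy0C, hy0d⟩, hyuniq⟩ := hC (a + c)
  set e : F n := (a + c) + y0 with he
  have hdey : hammingDist (a + c) y0 = hammingNorm e := vasHd_norm _ _
  have hnorm : hammingNorm e ≤ 1 := hdey ▸ hy0d
  have I1 : ∀ x : F n, a + (x + y0) = (c + e) + x := by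
    intro x; funext i; simp only [he, Pi.add_apply]
    exact (by decide : ∀ p q r s : ZMod 2, p + (s + r) = (q + ((p + q) + r)) + s) _ _ _ _
  have I3 : (c + e) + y0 = a := by
    funext i; simp only [he, Pi.add_apply]
    exact (by decide : ∀ p q r : ZMod 2, (q + ((p + q) + r)) + r = p) _ _ _
  have I2 : hammingDist (c + e) c = hammingNorm e := by
    rw [vasHd_norm]; congr 1; funext i; simp only [Pi.add_apply]
    exact (by decide : ∀ p q : ZMod 2, (q + p) + q = p) _ _
  have I2' : hammingDist c (c + e) = hammingNorm e := (hammingDist_comm _ _).trans I2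
  have key : ∀ (x y : F n), hammingDist w (vasVec (x + y) (wt x + lam y) x) =
      hammingDist a (x + y) + (if b = wt x + lam y then 0 else 1) + hammingDist c x := by
    intro x y; rw [hw, vasDist_vasVec]
  set x0 : F n := if b = wt c + lam y0 then c else c + e with hx0
  refine ⟨vasVec (x0 + y0) (wt x0 + lam y0) x0, ⟨⟨x0, y0, hy0C, rfl⟩, ?_⟩, ?_⟩
  · rw [key]
    by_cases hbc : b = wt c + lam y0
    · rw [hx0, if_pos hbc, if_pos hbc]
      have : hammingDist a (c + y0) ≤ 1 := by
        have := I1 c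
        rw [vasHd_norm, this, ← vasHd_norm, I2]
        exact hnorm
      simpa using this
    · rw [hx0, if_neg hbc]
      rw [I3, hammingDist_self, I2']
      interval_cases h : hammingNorm e
      · have he0 : e = 0 := hammingNorm_eq_zero.mp h
        simp only [he0, add_zero]
        split <;> omega
      · have hwte : wt e = 1 := vasWt_of_norm_one e h
        have : b = wt (c + e) + lam y0 := by
          rw [vasWt_add, hwte]
          exact (by decide : ∀ p q r : ZMod 2, p ≠ q + r → p = q + 1 + r) _ _ _ hbc
        rw [if_pos this]
  · rintro w' ⟨⟨x, y, hyC, rfl⟩, hd⟩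
    rw [key] at hd
    have hyy : y = y0 := by
      apply hyuniq
      refine ⟨hyC, ?_⟩
      have hle : hammingDist (a + c) y ≤ hammingDist a (x + y) + hammingDist c x := by
        rw [vasHd_norm a (x + y), vasHd_norm c x, vasHd_norm (a + c) y]
        have hid : (a + c) + y = (a + (x + y)) + (c + x) := by
          funext i; simp only [Pi.add_apply]
          exact (by decide : ∀ p q r s : ZMod 2, (p + q) + r = (p + (s + r)) + (q + s)) _ _ _ _
        rw [hid]
        exact vasNorm_add_le _ _
      split at hd <;> omega
    subst hyy
    have hD1 : hammingDist a (x + y) = hammingDist (c + e) x := by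
      rw [vasHd_norm, I1 x, ← vasHd_norm]
    rw [hD1] at hd
    have htri : hammingNorm e ≤ hammingDist (c + e) x + hammingDist c x := by
      have := hammingDist_triangle (c + e) x c
      rw [I2, hammingDist_comm x c] at this
      omega
    interval_cases hne : hammingNorm e
    · have he0 : e = 0 := hammingNorm_eq_zero.mp hne
      have hce : c + e = c := by rw [he0, add_zero]
      rw [hce] at hd
      have hxc : x = c := by
        have : hammingDist c x = 0 := by split at hd <;> omega
        exact (hammingDist_eq_zero.mp this).symm
      have hx0c : x0 = c := by
        rw [hx0, hce]; split <;> rfl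
      rw [hxc, hx0c]
    · have hind : b = wt x + lam y := by
        by_contra hnb
        rw [if_neg hnb] at hd
        omega
      rw [if_pos hind] at hd
      rcases (by omega : hammingDist c x = 0 ∨ hammingDist (c + e) x = 0) with h0 | h0
      · have hxc : x = c := (hammingDist_eq_zero.mp h0).symm
        have hx0c : x0 = c := by
          rw [hx0, if_pos (by rw [hind, hxc])]
        rw [hxc, hx0c]
      · have hxc : x = c + e := (hammingDist_eq_zero.mp h0).symm
        have hx0c : x0 = c + e := by
          rw [hx0, if_neg ?_]
          rw [hind, hxc, vasWt_add, vasWt_of_norm_one e hne]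
          exact (by decide : ∀ p q : ZMod 2, (p + 1) + q ≠ p + q) _ _
        rw [hxc, hx0c]
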